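/- Let (X,d,𝔪) be a metric measure space, p,q ∈ (1,∞) conjugate, Π a family of q-test plans, and f ∈ W^{1,p}_Π(X). Then the set of (Π,p)-weak upper gradients of f is closed under taking minima: if G₁, G₂ are (Π,p)-weak upper gradients of f, then min{G₁,G₂} is a (Π,p)-weak upper gradient of f. Consequently, the 𝔪-a.e. essential infimum |Df|_{Π,p} of all (Π,p)-weak upper gradients of f is itself a (Π,p)-weak upper gradient of f. -/

import Mathlib

open MeasureTheory Set Filter Topology unitInterval
open scoped ENNReal Classical

noncomputable section

variable {X : Type*} [MetricSpace X]

/-- Extension of a curve `γ : [0,1] → X` to `ℝ`, constant outside `[0,1]`. -/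
def curveExt (γ : C(I, X)) (t : ℝ) : X := γ (Set.projIcc 0 1 zero_le_one t)

/-- The curve `γ` has metric speed `v` at time `t`. -/
def HasSpeedAt (γ : C(I, X)) (t v : ℝ) : Prop :=
  Tendsto (fun h : ℝ => dist (curveExt γ (t + h)) (curveExt γ t) / |h|) (𝓝[≠] (0:ℝ)) (𝓝 v)

/-- The metric speed `|γ̇_t|` of the curve `γ` at time `t` (junk value `0` if it does not exist). -/
def speed (γ : C(I, X)) (t : ℝ) : ℝ :=
  if h : ∃ v, HasSpeedAt γ t v then h.choose else 0

/-- `γ` is an absolutely continuous curve: its metric speed exists a.e., is integrable, and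
`d(γ_s, γ_t) ≤ ∫_s^t |γ̇_r| dr`. -/
def IsACCurve (γ : C(I, X)) : Prop :=
  (∀ᵐ t ∂(volume.restrict (Icc (0:ℝ) 1)), ∃ v, HasSpeedAt γ t v) ∧
  IntegrableOn (speed γ) (Icc (0:ℝ) 1) ∧
  ∀ s t : ℝ, s ∈ Icc (0:ℝ) 1 → t ∈ Icc (0:ℝ) 1 → s ≤ t →
    dist (curveExt γ s) (curveExt γ t) ≤ ∫ r in Icc s t, speed γ r

variable [MeasurableSpace C(I, X)]

/-- `π` is a `q`-test plan on `(X, d, 𝔪)`. -/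
structure IsTestPlan [MeasurableSpace X] (𝔪 : Measure X) (q : ℝ≥0∞)
    (π : Measure C(I, X)) : Prop where
  prob : IsProbabilityMeasure π
  conc : ∀ᵐ γ ∂π, IsACCurve γ
  compr : ∃ C : ℝ, 0 < C ∧ ∀ t : I, π.map (fun γ : C(I, X) => γ t) ≤ ENNReal.ofReal C • 𝔪
  energy : (∫⁻ γ, ∫⁻ t in Icc (0:ℝ) 1, ENNReal.ofReal (|speed γ t| ^ q.toReal) ∂volume ∂π) < ⊤

/-- The family of all `q`-test plans on `(X, d, 𝔪)`. -/
def allPlans [MeasurableSpace X] (𝔪 : Measure X) (q : ℝ≥0∞) : Set (Measure C(I, X)) :=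
  {π | IsTestPlan 𝔪 q π}

/-- `π̂ := π ⊗ ℒ¹|_{[0,1]}`. -/
def hatPi (π : Measure C(I, X)) : Measure (C(I, X) × ℝ) :=
  π.prod (volume.restrict (Icc (0:ℝ) 1))

/-- `e_# π̂`, the pushforward of `π̂` under the joint evaluation map `e(γ,t) = γ_t`. -/
def evalPush [MeasurableSpace X] (π : Measure C(I, X)) : Measure X :=
  (hatPi π).map (fun p : C(I, X) × ℝ => curveExt p.1 p.2)

/-- `u` belongs to `W^{1,1}(0,1)` with weak derivative `u'`: `u` has an absolutely continuous
representative `F` on `[0,1]` whose derivative is the integrable function `u'`. -/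
def IsSobolevRep (u u' : ℝ → ℝ) : Prop :=
  IntegrableOn u (Icc (0:ℝ) 1) ∧ IntegrableOn u' (Icc (0:ℝ) 1) ∧
  ∃ F : ℝ → ℝ, (∀ᵐ t ∂(volume.restrict (Icc (0:ℝ) 1)), F t = u t) ∧
    ∀ t ∈ Icc (0:ℝ) 1, F t = F 0 + ∫ r in (0:ℝ)..t, u' r

/-- A choice of weak derivative of `t ↦ f(γ_t)` (junk value `0` if `f ∘ γ ∉ W^{1,1}(0,1)`). -/
def curveDeriv (f : X → ℝ) (γ : C(I, X)) : ℝ → ℝ :=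
  if h : ∃ u', IsSobolevRep (fun s => f (curveExt γ s)) u' then h.choose else fun _ => 0

/-- `G` is a weak upper gradient of `f` along the single plan `π`:
`f ∘ γ ∈ W^{1,1}(0,1)` for `π`-a.e. `γ`, and `|(f∘γ)'_t| ≤ G(γ_t)|γ̇_t|` for `π̂`-a.e. `(γ,t)`. -/
def IsWUGPlan (π : Measure C(I, X)) (f G : X → ℝ) : Prop :=
  (∀ᵐ γ ∂π, ∃ u', IsSobolevRep (fun s => f (curveExt γ s)) u') ∧
  ∀ᵐ p ∂(hatPi π), |curveDeriv f p.1 p.2| ≤ G (curveExt p.1 p.2) * speed p.1 p.2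

/-- `G` is a `(Π,p)`-weak upper gradient of `f`. -/
def IsWUGFamily (Plans : Set (Measure C(I, X))) (f G : X → ℝ) : Prop :=
  ∀ π ∈ Plans, IsWUGPlan π f G

/-- `G` is the minimal `(Π,p)`-weak upper gradient of `f`: it is a `(Π,p)`-weak upper gradient
in `L^p(𝔪)` and is `𝔪`-a.e. smaller than any other such gradient. -/
def IsMinWUG [MeasurableSpace X] (𝔪 : Measure X) (p : ℝ≥0∞)
    (Plans : Set (Measure C(I, X))) (f G : X → ℝ) : Prop :=
  MemLp G p 𝔪 ∧ IsWUGFamily Plans f G ∧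
    ∀ H : X → ℝ, MemLp H p 𝔪 → IsWUGFamily Plans f H → G ≤ᵐ[𝔪] H

/-- `f ∈ W^{1,p}(X)`: `f ∈ L^p(𝔪)` admits a `p`-weak upper gradient in `L^p(𝔪)` along every
`q`-test plan. -/
def MemSobolev [MeasurableSpace X] (𝔪 : Measure X) (p q : ℝ≥0∞) (f : X → ℝ) : Prop :=
  MemLp f p 𝔪 ∧ ∃ G : X → ℝ, MemLp G p 𝔪 ∧ IsWUGFamily (allPlans 𝔪 q) f G

/-- `κ` is a disintegration of `π̂ = π ⊗ ℒ¹|_{[0,1]}` along the evaluation map `e(γ,t) = γ_t`. -/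
def IsDisintegration [MeasurableSpace X] (π : Measure C(I, X))
    (κ : X → Measure (C(I, X) × ℝ)) : Prop :=
  (∀ s : Set (C(I, X) × ℝ), MeasurableSet s → Measurable fun x => κ x s) ∧
  (∀ᵐ x ∂(evalPush π), IsProbabilityMeasure (κ x) ∧
      κ x {p : C(I, X) × ℝ | curveExt p.1 p.2 ≠ x} = 0) ∧
  ∀ s : Set (C(I, X) × ℝ), MeasurableSet s → hatPi π s = ∫⁻ x, κ x s ∂(evalPush π)

/-- `φ[π,f](γ,t) = 𝟙_{|γ̇_t|>0} (f∘γ)'_t / |γ̇_t|` (so that `φ_± = ± φ`). -/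
def phiFn (f : X → ℝ) (γ : C(I, X)) (t : ℝ) : ℝ :=
  if 0 < speed γ t then curveDeriv f γ t / speed γ t else 0

/-- `Φ_±[π,f]` (for `ε = ±1`): the `κ x`-essential supremum of `ε ⬝ φ[π,f]` on
`S_π = {d(e_#π̂)/d𝔪 > 0}`, and `0` elsewhere. -/
def PhiSigned [MeasurableSpace X] (𝔪 : Measure X) (π : Measure C(I, X))
    (κ : X → Measure (C(I, X) × ℝ)) (f : X → ℝ) (ε : ℝ) (x : X) : ℝ :=
  if 0 < (evalPush π).rnDeriv 𝔪 x then
    essSup (fun p : C(I, X) × ℝ => ε * phiFn f p.1 p.2) (κ x)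
  else 0

/-- `Φ[π,f] := max{Φ_+[π,f], Φ_-[π,f]}`. -/
def PhiFn [MeasurableSpace X] (𝔪 : Measure X) (π : Measure C(I, X))
    (κ : X → Measure (C(I, X) × ℝ)) (f : X → ℝ) (x : X) : ℝ :=
  max (PhiSigned 𝔪 π κ f 1 x) (PhiSigned 𝔪 π κ f (-1) x)

/-- `g` is the `𝔪`-essential supremum of the family of functions `F i`. -/
def IsEssSupFamily {Y ι : Type*} [MeasurableSpace Y] (𝔪 : Measure Y)
    (F : ι → Y → ℝ) (g : Y → ℝ) : Prop :=
  AEMeasurable g 𝔪 ∧ (∀ i, F i ≤ᵐ[𝔪] g) ∧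
    ∀ h : Y → ℝ, AEMeasurable h 𝔪 → (∀ i, F i ≤ᵐ[𝔪] h) → g ≤ᵐ[𝔪] h

end

open MeasureTheory Set unitInterval
open scoped ENNReal


section Aux
open Filter Topology

variable {X : Type*} [MetricSpace X] [MeasurableSpace C(I, X)]

lemma speed_nonneg (γ : C(I, X)) (t : ℝ) : 0 ≤ speed γ t := by
  rw [speed]
  split
  · next h =>
    have hs : HasSpeedAt γ t h.choose := h.choose_spec
    exact ge_of_tendsto hs (Filter.Eventually.of_forall fun x => by positivity)
  · exact le_refl _

lemma measurable_curveExt [MeasurableSpace X] [BorelSpace X] [BorelSpace C(I, X)] :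
    Measurable (fun pp : C(I, X) × ℝ => curveExt pp.1 pp.2) := by
  have : Continuous (fun pp : C(I, X) × ℝ => curveExt pp.1 pp.2) :=
    ContinuousEval.continuous_eval.comp
      (continuous_fst.prodMk ((continuous_projIcc (h := zero_le_one)).comp continuous_snd))
  exact this.measurable

lemma testPlan_ae_comp [MeasurableSpace X] [BorelSpace X] [BorelSpace C(I, X)]
    {𝔪 : Measure X} {q : ℝ≥0∞} {π : Measure C(I, X)} (hπ : IsTestPlan 𝔪 q π)
    {P : X → Prop} (h : ∀ᵐ x ∂𝔪, P x) :
    ∀ᵐ pp ∂hatPi π, P (curveExt pp.1 pp.2) := by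
  haveI := hπ.prob
  obtain ⟨C, hC, hcomp⟩ := hπ.compr
  obtain ⟨N, hsub, hNm, hN0⟩ := exists_measurable_superset_of_null (ae_iff.1 h)
  have he : Measurable (fun pp : C(I, X) × ℝ => curveExt pp.1 pp.2) := measurable_curveExt
  have hA : hatPi π ((fun pp : C(I, X) × ℝ => curveExt pp.1 pp.2) ⁻¹' N) = 0 := by
    rw [hatPi, Measure.prod_apply_symm (he hNm)]
    have hz : ∀ t : ℝ,
        π ((fun γ : C(I, X) => (γ, t)) ⁻¹'
          ((fun pp : C(I, X) × ℝ => curveExt pp.1 pp.2) ⁻¹' N)) = 0 := by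
      intro t
      have hev : Measurable (fun γ : C(I, X) => γ (Set.projIcc 0 1 zero_le_one t)) :=
        (continuous_eval_const _).measurable
      have hmap := Measure.le_iff'.1 (hcomp (Set.projIcc 0 1 zero_le_one t)) N
      rw [Measure.map_apply hev hNm, Measure.smul_apply, smul_eq_mul, hN0, mul_zero] at hmap
      exact le_antisymm hmap zero_le
    simp only [hz, lintegral_zero]
  refine measure_mono_null ?_ hA
  intro pp hpp
  exact hsub hpp

lemma IsWUGPlan.min' {π : Measure C(I, X)} {f G₁ G₂ : X → ℝ}
    (h1 : IsWUGPlan π f G₁) (h2 : IsWUGPlan π f G₂) :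
    IsWUGPlan π f (fun x => min (G₁ x) (G₂ x)) := by
  refine ⟨h1.1, ?_⟩
  filter_upwards [h1.2, h2.2] with pp hp1 hp2
  have hs := speed_nonneg pp.1 pp.2
  calc |curveDeriv f pp.1 pp.2|
      ≤ min (G₁ (curveExt pp.1 pp.2) * speed pp.1 pp.2)
          (G₂ (curveExt pp.1 pp.2) * speed pp.1 pp.2) := le_min hp1 hp2
    _ = min (G₁ (curveExt pp.1 pp.2)) (G₂ (curveExt pp.1 pp.2)) * speed pp.1 pp.2 :=
        (min_mul_of_nonneg _ _ hs).symm

/-- Iterated pointwise minima of a sequence of functions. -/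
def minSeq {Y : Type*} (g : ℕ → Y → ℝ) : ℕ → Y → ℝ
  | 0 => g 0
  | n+1 => fun x => min (minSeq g n x) (g (n+1) x)

end Aux

/-- The set of `(Π,p)`-weak upper gradients of `f ∈ W^{1,p}_Π(X)` is closed under minima;
consequently, any `𝔪`-a.e. essential infimum of all `(Π,p)`-weak upper gradients of `f` is
itself a `(Π,p)`-weak upper gradient of `f` (and lies in `L^p(𝔪)`). -/
theorem min_wug_and_essInf_is_wug {X : Type*} [MetricSpace X] [CompleteSpace X]
    [TopologicalSpace.SeparableSpace X] [MeasurableSpace X] [BorelSpace X]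
    [MeasurableSpace C(I, X)] [BorelSpace C(I, X)]
    (𝔪 : Measure X) (h𝔪 : ∀ (x : X) (r : ℝ), 𝔪 (Metric.closedBall x r) < ⊤)
    (p q : ℝ) (hpq : p.HolderConjugate q)
    (Plans : Set (Measure C(I, X))) (hPlans : Plans ⊆ allPlans 𝔪 (ENNReal.ofReal q))
    (f : X → ℝ) (hf : MemLp f (ENNReal.ofReal p) 𝔪)
    (hfW : ∃ G : X → ℝ, MemLp G (ENNReal.ofReal p) 𝔪 ∧ IsWUGFamily Plans f G) :
    (∀ G₁ G₂ : X → ℝ, MemLp G₁ (ENNReal.ofReal p) 𝔪 → MemLp G₂ (ENNReal.ofReal p) 𝔪 →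
      IsWUGFamily Plans f G₁ → IsWUGFamily Plans f G₂ →
      IsWUGFamily Plans f fun x => min (G₁ x) (G₂ x)) ∧
    ∀ D : X → ℝ, AEMeasurable D 𝔪 →
      (∀ G : X → ℝ, MemLp G (ENNReal.ofReal p) 𝔪 → IsWUGFamily Plans f G → D ≤ᵐ[𝔪] G) →
      (∀ D' : X → ℝ, AEMeasurable D' 𝔪 →
        (∀ G : X → ℝ, MemLp G (ENNReal.ofReal p) 𝔪 → IsWUGFamily Plans f G → D' ≤ᵐ[𝔪] G) →
        D' ≤ᵐ[𝔪] D) →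
      MemLp D (ENNReal.ofReal p) 𝔪 ∧ IsWUGFamily Plans f D := by
  classical
  obtain ⟨g₀, hg₀p, hg₀w⟩ := hfW
  have part1 : ∀ G₁ G₂ : X → ℝ, MemLp G₁ (ENNReal.ofReal p) 𝔪 → MemLp G₂ (ENNReal.ofReal p) 𝔪 →
      IsWUGFamily Plans f G₁ → IsWUGFamily Plans f G₂ →
      IsWUGFamily Plans f fun x => min (G₁ x) (G₂ x) := by
    intro G₁ G₂ _ _ h1 h2 π hπ
    exact (h1 π hπ).min' (h2 π hπ)
  refine ⟨part1, ?_⟩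
  intro D hDmeas hDlb hDmax
  -- the family of weak upper gradients in `L^p`
  set Fam : (X → ℝ) → Prop :=
    fun G => MemLp G (ENNReal.ofReal p) 𝔪 ∧ IsWUGFamily Plans f G with hFamdef
  have hFamMin : ∀ G₁ G₂ : X → ℝ, Fam G₁ → Fam G₂ → Fam (fun x => min (G₁ x) (G₂ x)) := by
    intro G₁ G₂ h1 h2
    refine ⟨?_, part1 _ _ h1.1 h2.1 h1.2 h2.2⟩
    have := h1.1.inf h2.1
    have heq : (G₁ ⊓ G₂) = fun x => min (G₁ x) (G₂ x) := by
      funext x; rfl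
    rwa [heq] at this
  have habs : ∀ G : X → ℝ, Fam G → Fam fun x => |G x| := by
    intro G hG
    constructor
    · have := hG.1.abs
      have heq : |G| = fun x => |G x| := rfl
      rwa [heq] at this
    · intro π hπ
      refine ⟨(hG.2 π hπ).1, ?_⟩
      filter_upwards [(hG.2 π hπ).2] with pp hp
      exact hp.trans (mul_le_mul_of_nonneg_right (le_abs_self _) (speed_nonneg _ _))
  -- σ-finiteness of `𝔪`
  haveI : IsLocallyFiniteMeasure 𝔪 :=
    ⟨fun x => ⟨Metric.closedBall x 1, Metric.closedBall_mem_nhds x one_pos, h𝔪 x 1⟩⟩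
  haveI : SigmaFinite 𝔪 := by infer_instance
  -- every member of the family is a.e. nonnegative
  have hnonneg : ∀ G : X → ℝ, Fam G → (fun _ => (0:ℝ)) ≤ᵐ[𝔪] G := by
    intro G hG
    have hGsm := hG.1.aestronglyMeasurable.aemeasurable
    set Gm := hGsm.mk G with hGmdef
    have hGmmeas : Measurable Gm := hGsm.measurable_mk
    have hGeq : G =ᵐ[𝔪] Gm := hGsm.ae_eq_mk
    have hB : ∀ n : ℕ, 𝔪 ({x | Gm x < 0} ∩ spanningSets 𝔪 n) = 0 := by
      intro n
      set B := {x | Gm x < 0} ∩ spanningSets 𝔪 n with hBdef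
      have hBmeas : MeasurableSet B :=
        (measurableSet_lt hGmmeas measurable_const).inter (measurableSet_spanningSets 𝔪 n)
      have hBfin : 𝔪 B ≠ ∞ :=
        (lt_of_le_of_lt (measure_mono Set.inter_subset_right)
          (measure_spanningSets_lt_top 𝔪 n)).ne
      have hmem : ∀ c : ℝ, Fam fun x => G x - B.indicator (fun _ => c) x := by
        intro c
        constructor
        · exact hG.1.sub (memLp_indicator_const _ hBmeas c (Or.inr hBfin))
        · intro π hπ
          refine ⟨(hG.2 π hπ).1, ?_⟩
          have h2 := testPlan_ae_comp (hPlans hπ) hGeq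
          filter_upwards [(hG.2 π hπ).2, h2] with pp hp1 hp2
          rcases (speed_nonneg pp.1 pp.2).eq_or_lt with hs | hs
          · rw [← hs, mul_zero] at hp1 ⊢
            exact hp1
          · have habs0 : (0:ℝ) ≤ |curveDeriv f pp.1 pp.2| := abs_nonneg _
            have hGe : 0 ≤ G (curveExt pp.1 pp.2) := by nlinarith
            have hnotB : curveExt pp.1 pp.2 ∉ B := by
              intro hmemB
              have hlt : Gm (curveExt pp.1 pp.2) < 0 := hmemB.1
              rw [← hp2] at hlt
              linarith
            simpa [Set.indicator_of_notMem hnotB] using hp1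
      have hDc : ∀ᵐ x ∂𝔪, ∀ c : ℕ, D x ≤ G x - B.indicator (fun _ => (c:ℝ)) x :=
        ae_all_iff.2 fun c => hDlb _ (hmem c).1 (hmem c).2
      have hnotB : ∀ᵐ x ∂𝔪, x ∉ B := by
        filter_upwards [hDc] with x hx hxB
        obtain ⟨c, hc⟩ := exists_nat_gt (G x - D x)
        have := hx c
        rw [Set.indicator_of_mem hxB] at this
        linarith
      have := ae_iff.1 hnotB
      simpa using this
    have hGm0 : 𝔪 {x | Gm x < 0} = 0 := by
      have hun : {x | Gm x < 0} = ⋃ n, ({x | Gm x < 0} ∩ spanningSets 𝔪 n) := by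
        rw [← Set.inter_iUnion, iUnion_spanningSets, Set.inter_univ]
      rw [hun]
      exact measure_iUnion_null hB
    have hGm0' : ∀ᵐ x ∂𝔪, ¬ Gm x < 0 := by
      rw [ae_iff]
      simpa using hGm0
    filter_upwards [hGeq, hGm0'] with x h1 h2
    rw [h1]
    linarith [not_lt.1 h2]
  -- `D` is in `L^p`
  have habs₀ : Fam fun x => |g₀ x| := habs g₀ ⟨hg₀p, hg₀w⟩
  have hD0 : ∀ᵐ x ∂𝔪, 0 ≤ D x := by
    have := hDmax (fun _ => (0:ℝ)) aemeasurable_const fun G hGp hGw => hnonneg G ⟨hGp, hGw⟩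
    filter_upwards [this] with x hx
    exact hx
  have hDub : D ≤ᵐ[𝔪] fun x => |g₀ x| := hDlb _ habs₀.1 habs₀.2
  have hDLp : MemLp D (ENNReal.ofReal p) 𝔪 := by
    refine habs₀.1.mono' hDmeas.aestronglyMeasurable ?_
    filter_upwards [hD0, hDub] with x h1 h2
    rw [Real.norm_eq_abs, abs_of_nonneg h1]
    exact h2
  -- a finite measure equivalent to `𝔪`
  obtain ⟨μ, hμfin, h𝔪μ, hμ𝔪⟩ := exists_isFiniteMeasure_absolutelyContinuous 𝔪
  haveI := hμfin
  set J : (X → ℝ) → ℝ := fun G => ∫ x, Real.arctan (G x) ∂μ with hJdef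
  have harc : ∀ x : ℝ, ‖Real.arctan x‖ ≤ Real.pi/2 := fun x => by
    rw [Real.norm_eq_abs, abs_le]
    exact ⟨(Real.neg_pi_div_two_lt_arctan x).le, (Real.arctan_lt_pi_div_two x).le⟩
  have hint : ∀ G : X → ℝ, AEStronglyMeasurable G 𝔪 →
      Integrable (fun x => Real.arctan (G x)) μ := by
    intro G hG
    have hGμ : AEStronglyMeasurable G μ := AEStronglyMeasurable.mono_ac hμ𝔪 hG
    refine ⟨Real.continuous_arctan.comp_aestronglyMeasurable hGμ, ?_⟩
    exact HasFiniteIntegral.of_bounded (C := Real.pi/2) (Filter.Eventually.of_forall fun x => harc _)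
  have hJbd : ∀ G : X → ℝ, ‖J G‖ ≤ Real.pi/2 * (μ Set.univ).toReal := fun G =>
    norm_integral_le_of_norm_le_const (Filter.Eventually.of_forall fun x => harc _)
  set S : Set ℝ := J '' {G | Fam G} with hSdef
  have hSne : S.Nonempty := ⟨J g₀, ⟨g₀, ⟨hg₀p, hg₀w⟩, rfl⟩⟩
  have hSbd : BddBelow S := by
    refine ⟨-(Real.pi/2 * (μ Set.univ).toReal), ?_⟩
    rintro r ⟨G, -, rfl⟩
    have := hJbd G
    rw [Real.norm_eq_abs, abs_le] at this
    exact this.1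
  set m := sInf S with hmdef
  have hgseq : ∀ n : ℕ, ∃ G : X → ℝ, Fam G ∧ J G < m + 1/((n:ℝ)+1) := by
    intro n
    obtain ⟨r, ⟨G, hG, rfl⟩, hr⟩ :=
      Real.lt_sInf_add_pos hSne (show (0:ℝ) < 1/((n:ℝ)+1) by positivity)
    exact ⟨G, hG, hr⟩
  choose g hgFam hgJ using hgseq
  set Gmin : ℕ → X → ℝ := minSeq g with hGmindef
  have hGminFam : ∀ n, Fam (Gmin n) := by
    intro n
    induction n with
    | zero => exact hgFam 0
    | succ k ih => exact hFamMin _ _ ih (hgFam (k+1))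
  have hGminAnti : ∀ n x, Gmin (n+1) x ≤ Gmin n x := fun n x => min_le_left _ _
  have hGminLe : ∀ n x, Gmin n x ≤ g n x := by
    intro n
    cases n with
    | zero => exact fun x => le_refl _
    | succ k => exact fun x => min_le_right _ _
  have hJGmin : ∀ n, J (Gmin n) < m + 1/((n:ℝ)+1) := by
    intro n
    refine lt_of_le_of_lt ?_ (hgJ n)
    refine integral_mono (hint _ (hGminFam n).1.aestronglyMeasurable)
      (hint _ (hgFam n).1.aestronglyMeasurable) ?_
    intro x
    exact Real.arctan_strictMono.monotone (hGminLe n x)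
  have hmle : ∀ n, m ≤ J (Gmin n) := fun n => csInf_le hSbd ⟨Gmin n, hGminFam n, rfl⟩
  -- measurable versions and the candidate minimal gradient
  have hGsm : ∀ n, AEMeasurable (Gmin n) 𝔪 :=
    fun n => (hGminFam n).1.aestronglyMeasurable.aemeasurable
  set Gm : ℕ → X → ℝ := fun n => (hGsm n).mk (Gmin n) with hGmdef
  have hGmmeas : ∀ n, Measurable (Gm n) := fun n => (hGsm n).measurable_mk
  have hGmeq : ∀ n, Gmin n =ᵐ[𝔪] Gm n := fun n => (hGsm n).ae_eq_mk
  set Dm : X → ℝ := hDmeas.mk D with hDmdef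
  have hDmm : Measurable Dm := hDmeas.measurable_mk
  have hDeq : D =ᵐ[𝔪] Dm := hDmeas.ae_eq_mk
  set Ghat : X → ℝ := fun x => ⨅ n : ℕ, max (Dm x) (Gm n x) with hGhatdef
  have hGhatmeas : Measurable Ghat := Measurable.iInf fun n => hDmm.max (hGmmeas n)
  have hE : ∀ᵐ x ∂𝔪, Dm x = D x ∧ (∀ n, Gm n x = Gmin n x) ∧ ∀ n, D x ≤ Gmin n x := by
    have h1 : ∀ᵐ x ∂𝔪, ∀ n, Gm n x = Gmin n x := ae_all_iff.2 fun n => (hGmeq n).symm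
    have h2 : ∀ᵐ x ∂𝔪, ∀ n, D x ≤ Gmin n x :=
      ae_all_iff.2 fun n => hDlb _ (hGminFam n).1 (hGminFam n).2
    filter_upwards [hDeq.symm, h1, h2] with x a b c
    exact ⟨a, b, c⟩
  have hGhatE : ∀ x, Dm x = D x → (∀ n, Gm n x = Gmin n x) → (∀ n, D x ≤ Gmin n x) →
      D x ≤ Ghat x ∧ Tendsto (fun n => Gmin n x) atTop (𝓝 (Ghat x)) := by
    intro x hD hG hle
    have hmax : ∀ n, max (Dm x) (Gm n x) = Gmin n x := fun n => by
      rw [hD, hG n, max_eq_right (hle n)]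
    have h1 : Ghat x = ⨅ n, Gmin n x := iInf_congr hmax
    have hbdd : BddBelow (Set.range fun n => Gmin n x) := by
      refine ⟨D x, ?_⟩
      rintro r ⟨n, rfl⟩
      exact hle n
    have hanti : Antitone fun n => Gmin n x := antitone_nat_of_succ_le fun n => hGminAnti n x
    have h3 : Tendsto (fun n => Gmin n x) atTop (𝓝 (⨅ n, Gmin n x)) :=
      tendsto_atTop_ciInf hanti hbdd
    refine ⟨?_, h1 ▸ h3⟩
    rw [h1]
    exact le_ciInf hle
  have hμae : ∀ {P : X → Prop}, (∀ᵐ x ∂𝔪, P x) → ∀ᵐ x ∂μ, P x := fun h => hμ𝔪.ae_le h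
  have htendJ : Tendsto (fun n => J (Gmin n)) atTop (𝓝 (J Ghat)) := by
    refine tendsto_integral_of_dominated_convergence (fun _ => Real.pi/2)
      (fun n => (hint _ (hGminFam n).1.aestronglyMeasurable).1)
      (integrable_const _) (fun n => Filter.Eventually.of_forall fun x => harc _) (hμae ?_)
    filter_upwards [hE] with x hx
    exact (Real.continuous_arctan.tendsto _).comp (hGhatE x hx.1 hx.2.1 hx.2.2).2
  have hJGhat : J Ghat = m := by
    have h1 : Tendsto (fun n : ℕ => m + 1/((n:ℝ)+1)) atTop (𝓝 m) := by
      have h2 := tendsto_one_div_add_atTop_nhds_zero_nat (𝕜 := ℝ)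
      simpa using tendsto_const_nhds.add h2
    have hub : J Ghat ≤ m :=
      le_of_tendsto_of_tendsto' htendJ h1 fun n => (hJGmin n).le
    have hlb : m ≤ J Ghat := ge_of_tendsto' htendJ hmle
    exact le_antisymm hub hlb
  have hGhatLB : ∀ H : X → ℝ, Fam H → Ghat ≤ᵐ[𝔪] H := by
    intro H hH
    have hFn : ∀ n, Fam fun x => min (Gmin n x) (H x) := fun n => hFamMin _ _ (hGminFam n) hH
    have htend2 : Tendsto (fun n => J fun x => min (Gmin n x) (H x)) atTop
        (𝓝 (J fun x => min (Ghat x) (H x))) := by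
      refine tendsto_integral_of_dominated_convergence (fun _ => Real.pi/2)
        (fun n => (hint _ (hFn n).1.aestronglyMeasurable).1) (integrable_const _)
        (fun n => Filter.Eventually.of_forall fun x => harc _) (hμae ?_)
      filter_upwards [hE] with x hx
      exact (Real.continuous_arctan.tendsto _).comp
        (((hGhatE x hx.1 hx.2.1 hx.2.2).2).min tendsto_const_nhds)
    have hm2 : m ≤ J fun x => min (Ghat x) (H x) :=
      ge_of_tendsto' htend2 fun n => csInf_le hSbd ⟨_, hFn n, rfl⟩
    set u : X → ℝ := fun x => Real.arctan (Ghat x) - Real.arctan (min (Ghat x) (H x)) with hudef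
    have hu0 : ∀ x, 0 ≤ u x := fun x =>
      sub_nonneg.2 (Real.arctan_strictMono.monotone (min_le_left _ _))
    have hminsm : AEStronglyMeasurable (fun x => min (Ghat x) (H x)) 𝔪 := by
      have := hGhatmeas.aestronglyMeasurable.inf hH.1.aestronglyMeasurable
      have heq : (Ghat ⊓ H) = fun x => min (Ghat x) (H x) := by
        funext x; rfl
      rwa [heq] at this
    have huint : Integrable u μ :=
      (hint _ hGhatmeas.aestronglyMeasurable).sub (hint _ hminsm)
    have hueq : ∫ x, u x ∂μ = J Ghat - J (fun x => min (Ghat x) (H x)) :=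
      integral_sub (hint _ hGhatmeas.aestronglyMeasurable) (hint _ hminsm)
    have hule : ∫ x, u x ∂μ ≤ 0 := by
      rw [hueq, hJGhat]
      linarith
    have huz : ∫ x, u x ∂μ = 0 :=
      le_antisymm hule (integral_nonneg hu0)
    have hu00 : u =ᵐ[μ] 0 := (integral_eq_zero_iff_of_nonneg hu0 huint).1 huz
    have hu00' : ∀ᵐ x ∂𝔪, u x = 0 := h𝔪μ.ae_le hu00
    filter_upwards [hu00'] with x hx
    have h1 : Real.arctan (Ghat x) = Real.arctan (min (Ghat x) (H x)) := by
      have hx' : Real.arctan (Ghat x) - Real.arctan (min (Ghat x) (H x)) = 0 := hx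
      linarith
    have h2 : Ghat x = min (Ghat x) (H x) := Real.arctan_injective h1
    rw [h2]
    exact min_le_right _ _
  have hGhatD : Ghat ≤ᵐ[𝔪] D :=
    hDmax Ghat hGhatmeas.aemeasurable fun G hGp hGw => hGhatLB G ⟨hGp, hGw⟩
  have hDGhat : D =ᵐ[𝔪] Ghat := by
    have h1 : D ≤ᵐ[𝔪] Ghat := by
      filter_upwards [hE] with x hx
      exact (hGhatE x hx.1 hx.2.1 hx.2.2).1
    exact h1.antisymm hGhatD
  refine ⟨hDLp, ?_⟩
  intro π hπ
  refine ⟨(hg₀w π hπ).1, ?_⟩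
  have hall : ∀ᵐ pp ∂hatPi π, ∀ n,
      |curveDeriv f pp.1 pp.2| ≤ Gmin n (curveExt pp.1 pp.2) * speed pp.1 pp.2 :=
    ae_all_iff.2 fun n => ((hGminFam n).2 π hπ).2
  have hEtr : ∀ᵐ pp ∂hatPi π,
      (Dm (curveExt pp.1 pp.2) = D (curveExt pp.1 pp.2) ∧
        (∀ n, Gm n (curveExt pp.1 pp.2) = Gmin n (curveExt pp.1 pp.2)) ∧
        ∀ n, D (curveExt pp.1 pp.2) ≤ Gmin n (curveExt pp.1 pp.2)) ∧
      D (curveExt pp.1 pp.2) = Ghat (curveExt pp.1 pp.2) := by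
    refine testPlan_ae_comp (hPlans hπ)
      (P := fun x => (Dm x = D x ∧ (∀ n, Gm n x = Gmin n x) ∧ ∀ n, D x ≤ Gmin n x) ∧
        D x = Ghat x) ?_
    filter_upwards [hE, hDGhat] with x h1 h2
    exact ⟨h1, h2⟩
  filter_upwards [hall, hEtr] with pp h1 h2
  obtain ⟨⟨hDmx, hGmx, hlex⟩, hDGx⟩ := h2
  rcases (speed_nonneg pp.1 pp.2).eq_or_lt with hs | hs
  · have h10 := h1 0
    rw [← hs, mul_zero] at h10 ⊢
    exact h10
  · have hdiv : ∀ n, |curveDeriv f pp.1 pp.2| / speed pp.1 pp.2 ≤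
        max (Dm (curveExt pp.1 pp.2)) (Gm n (curveExt pp.1 pp.2)) := by
      intro n
      have hd1 : |curveDeriv f pp.1 pp.2| / speed pp.1 pp.2 ≤ Gmin n (curveExt pp.1 pp.2) :=
        (div_le_iff₀ hs).2 (h1 n)
      rw [← hGmx n] at hd1
      exact hd1.trans (le_max_right _ _)
    have hdiv2 : |curveDeriv f pp.1 pp.2| / speed pp.1 pp.2 ≤ Ghat (curveExt pp.1 pp.2) :=
      le_ciInf hdiv
    calc |curveDeriv f pp.1 pp.2|
        = |curveDeriv f pp.1 pp.2| / speed pp.1 pp.2 * speed pp.1 pp.2 :=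
          (div_mul_cancel₀ _ hs.ne').symm
      _ ≤ D (curveExt pp.1 pp.2) * speed pp.1 pp.2 := by
          refine mul_le_mul_of_nonneg_right ?_ hs.le
          rw [hDGx]
          exact hdiv2
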